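/- Let γ > 0, C > 0, and for a < a* define f(s) = ((a*−a)/a*) s² + C e^{−γs} for s ∈ (0,∞). Then min_{s>0} f(s) = (1+o(1))·(a*−a)|ln(a*−a)|²/(a*γ²) as a ↗ a*, and the unique minimum point s_γ satisfies s_γ = (1/γ)[|ln(a*−a)| − ln|ln(a*−a)| + O(1)] as a ↗ a*. -/

import Mathlib

open MeasureTheory Filter Topology Metric Set

noncomputable section

abbrev Pt := EuclideanSpace ℝ (Fin 2)

/-- Gross–Pitaevskii energy functional. -/
def gpE (V : Pt → ℝ) (a : ℝ) (u : Pt → ℝ) : ℝ :=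
  (∫ x, ‖fderiv ℝ u x‖ ^ 2) + (∫ x, V x * u x ^ 2) - a / 2 * ∫ x, u x ^ 4

/-- Admissible class: unit L²-sphere of `H = {u ∈ H¹ : ∫ V u² < ∞}`. -/
def Adm (V : Pt → ℝ) (u : Pt → ℝ) : Prop :=
  Integrable (fun x => ‖fderiv ℝ u x‖ ^ 2) ∧ Integrable (fun x => V x * u x ^ 2) ∧
  Integrable (fun x => u x ^ 2) ∧ Integrable (fun x => u x ^ 4) ∧ (∫ x, u x ^ 2) = 1

/-- The GP ground-state energy `e(a)`. -/
def gpe (V : Pt → ℝ) (a : ℝ) : ℝ := sInf ((gpE V a) '' {u | Adm V u})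

/-- Laplacian as the sum of repeated directional derivatives. -/
def lap (u : Pt → ℝ) (x : Pt) : ℝ :=
  ∑ i : Fin 2, fderiv ℝ (fun y => fderiv ℝ u y (EuclideanSpace.single i 1)) x
      (EuclideanSpace.single i 1)

/-- `Q` is the positive radial ground state of `−Δu + u = u³` in `ℝ²`. -/
def IsGroundQ (Q : Pt → ℝ) : Prop :=
  (∀ x, 0 < Q x) ∧ (∀ x y : Pt, ‖x‖ = ‖y‖ → Q x = Q y) ∧
  Integrable (fun x => Q x ^ 2) ∧ Integrable (fun x => ‖fderiv ℝ Q x‖ ^ 2) ∧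
  Integrable (fun x => Q x ^ 4) ∧ (∀ x, -lap Q x + Q x = Q x ^ 3)

lemma my_log_le_half (x : ℝ) (hx : 0 < x) : Real.log x ≤ x / 2 := by
  have h1 : Real.log (Real.sqrt x) ≤ Real.sqrt x - 1 :=
    Real.log_le_sub_one_of_pos (Real.sqrt_pos.mpr hx)
  have h2 : Real.log (Real.sqrt x) = Real.log x / 2 := Real.log_sqrt hx.le
  have h3 : Real.sqrt x ^ 2 = x := Real.sq_sqrt hx.le
  nlinarith [Real.sqrt_nonneg x, sq_nonneg (Real.sqrt x - 2)]

lemma my_crit_exists (ε γ C : ℝ) (hε : 0 < ε) (hγ : 0 < γ) (hC : 0 < C) :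
    ∃ t, 0 < t ∧ 2*ε*t = C*γ*Real.exp (-(γ*t)) := by
  set h : ℝ → ℝ := fun t => 2*ε*t - C*γ*Real.exp (-(γ*t)) with hh
  have hcont : Continuous h := by fun_prop
  have ht0 : (0:ℝ) < C*γ/(2*ε) := by positivity
  have hneg : h 0 < 0 := by
    simp only [hh]
    norm_num
    positivity
  have hpos : 0 < h (C*γ/(2*ε)) := by
    have he : Real.exp (-(γ*(C*γ/(2*ε)))) < 1 := by
      apply Real.exp_lt_one_iff.mpr
      nlinarith
    have : h (C*γ/(2*ε)) = C*γ*(1 - Real.exp (-(γ*(C*γ/(2*ε))))) := by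
      simp only [hh]; field_simp
    rw [this]; nlinarith [mul_pos hC hγ]
  have := intermediate_value_Ioo (le_of_lt ht0) hcont.continuousOn
  have h0mem : (0:ℝ) ∈ Ioo (h 0) (h (C*γ/(2*ε))) := ⟨hneg, hpos⟩
  obtain ⟨t, htm, hth⟩ := this h0mem
  exact ⟨t, htm.1, by simp only [hh] at hth; linarith⟩


set_option maxHeartbeats 1000000 in
/-- asymptotics of the minimum of
`f(s) = ((a*−a)/a*) s² + C e^{−γ s}` over `s > 0` as `a ↗ a*`. -/
theorem min_asymptotics (astar γ C : ℝ) (hastar : 0 < astar) (hγ : 0 < γ) (hC : 0 < C) :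
    ∃ s : ℝ → ℝ,
      (∀ᶠ a in 𝓝[<] astar,
        s a ∈ Set.Ioi (0:ℝ) ∧
        IsMinOn (fun t => (astar - a) / astar * t ^ 2 + C * Real.exp (-(γ * t)))
          (Set.Ioi 0) (s a) ∧
        (∀ t ∈ Set.Ioi (0:ℝ),
          IsMinOn (fun t' => (astar - a) / astar * t' ^ 2 + C * Real.exp (-(γ * t')))
            (Set.Ioi 0) t → t = s a)) ∧
      (∃ M : ℝ, ∀ᶠ a in 𝓝[<] astar,
        |γ * s a - (|Real.log (astar - a)| - Real.log |Real.log (astar - a)|)| ≤ M) ∧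
      Tendsto (fun a =>
          ((astar - a) / astar * (s a) ^ 2 + C * Real.exp (-(γ * s a))) /
            ((astar - a) * |Real.log (astar - a)| ^ 2 / (astar * γ ^ 2)))
        (𝓝[<] astar) (𝓝 1) := by
  have hex : ∀ a, a < astar → ∃ t, 0 < t ∧
      2*((astar - a)/astar)*t = C*γ*Real.exp (-(γ*t)) := fun a ha =>
    my_crit_exists _ γ C (div_pos (by linarith) hastar) hγ hC
  set K : ℝ := Real.log (C*γ^2*astar/2) with hK
  set M : ℝ := |K| + 2 with hM
  set T : ℝ := 4*|K| + 16 with hT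
  set δ : ℝ := min (1/2) (Real.exp (-T)) with hδ
  have hδpos : 0 < δ := lt_min (by norm_num) (Real.exp_pos _)
  set s : ℝ → ℝ := fun a => if h : a < astar then (hex a h).choose else 1 with hsdef
  have hs_spec : ∀ a, a < astar → 0 < s a ∧
      2*((astar - a)/astar)*(s a) = C*γ*Real.exp (-(γ*(s a))) := by
    intro a h
    simp only [hsdef, dif_pos h]
    exact (hex a h).choose_spec
  -- key convexity inequality
  have hkey : ∀ a, a < astar → ∀ t : ℝ,
      (astar - a)/astar * (s a)^2 + C * Real.exp (-(γ * s a)) +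
        (astar - a)/astar * (t - s a)^2 ≤
      (astar - a)/astar * t^2 + C * Real.exp (-(γ * t)) := by
    intro a ha t
    obtain ⟨hp, heq⟩ := hs_spec a ha
    have hε : 0 < (astar - a)/astar := div_pos (by linarith) hastar
    have hE : 0 < Real.exp (-(γ * s a)) := Real.exp_pos _
    have hsum : Real.exp (-(γ*t)) =
        Real.exp (-(γ * s a)) * Real.exp (-(γ*(t - s a))) := by
      rw [← Real.exp_add]; ring_nf
    have hx : (-(γ*(t - s a))) + 1 ≤ Real.exp (-(γ*(t - s a))) :=
      Real.add_one_le_exp _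
    rw [hsum]
    nlinarith [mul_le_mul_of_nonneg_left hx (le_of_lt (mul_pos hC hE)), heq,
      mul_pos hC hE, sq_nonneg (t - s a)]
  -- eventual quantitative facts
  have hev : ∀ᶠ a in 𝓝[<] astar, a < astar ∧ 0 < astar - a ∧ astar - a < δ := by
    filter_upwards [Ioo_mem_nhdsLT_of_mem
      (show astar ∈ Ioc (astar - δ) astar from ⟨by linarith, le_refl _⟩)] with a ha
    exact ⟨ha.2, by linarith [ha.2], by linarith [ha.1]⟩
  have hmain : ∀ᶠ a in 𝓝[<] astar,
      |Real.log (astar - a)| = -Real.log (astar - a) ∧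
      T < -Real.log (astar - a) ∧
      (-Real.log (astar - a))/4 ≤ γ * s a ∧
      γ * s a ≤ 2*(-Real.log (astar - a)) ∧
      |γ * s a - ((-Real.log (astar - a)) - Real.log (-Real.log (astar - a)))| ≤ M ∧
      a < astar := by
    filter_upwards [hev] with a ⟨ha, hd0, hdδ⟩
    obtain ⟨hp, heq⟩ := hs_spec a ha
    set σ : ℝ := s a with hσ
    clear_value σ
    set d : ℝ := astar - a with hd
    clear_value d
    set ℓ : ℝ := -Real.log d with hℓdef
    have hd1 : d < 1 := lt_of_lt_of_le hdδ (le_trans (min_le_left _ _) (by norm_num))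
    have hlogneg : Real.log d < 0 := Real.log_neg hd0 hd1
    have habs : |Real.log d| = -Real.log d := abs_of_neg hlogneg
    have hTℓ : T < ℓ := by
      have : Real.log d < Real.log (Real.exp (-T)) :=
        Real.log_lt_log hd0 (lt_of_lt_of_le hdδ (min_le_right _ _))
      rw [Real.log_exp] at this
      simp only [hℓdef]; linarith
    have hℓpos : 0 < ℓ := by
      have hTpos : (0:ℝ) ≤ T := by simp only [hT]; positivity
      linarith
    set u : ℝ := γ * σ with hu
    have hupos : 0 < u := mul_pos hγ hp
    -- the transcendental equation for u
    have h1 : u * Real.exp u = C*γ^2*astar/(2*d) := by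
      have h0 : Real.exp (-(γ * σ)) * Real.exp (γ * σ) = 1 := by
        rw [← Real.exp_add]; simp
      have h2 : (2*(d/astar)* σ) * Real.exp (γ * σ) = C*γ := by
        rw [heq, mul_assoc, h0, mul_one]
      have h3 : u * Real.exp u = γ*astar/(2*d) * ((2*(d/astar)* σ) * Real.exp (γ* σ)) := by
        simp only [hu]
        field_simp
      rw [h2] at h3
      rw [h3]; ring
    have h4 : Real.exp (ℓ + K) = C*γ^2*astar/(2*d) := by
      rw [Real.exp_add, hK, Real.exp_log (by positivity), hℓdef, Real.exp_neg,
        Real.exp_log hd0]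
      field_simp
    have hlogu : u + Real.log u = ℓ + K := by
      have h5 := congrArg Real.log (h1.trans h4.symm)
      rw [Real.log_mul (ne_of_gt hupos) (Real.exp_ne_zero _), Real.log_exp,
        Real.log_exp] at h5
      linarith
    have hKabs1 := le_abs_self K
    have hKabs2 := neg_abs_le K
    have hℓbig : 4*|K| + 16 < ℓ := by rw [hT] at hTℓ; exact hTℓ
    -- upper bound u ≤ 2ℓ
    have hu2L : u ≤ 2*ℓ := by
      rcases le_or_gt u 1 with h | h
      · linarith [abs_nonneg K]
      · have hlu : 0 ≤ Real.log u := Real.log_nonneg h.le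
        linarith
    -- lower bound ℓ/4 ≤ u
    have hlogu_ub : Real.log u ≤ 1 + ℓ/2 := by
      have h6 : Real.log u ≤ Real.log (2*ℓ) := by
        apply Real.log_le_log hupos hu2L
      have h7 : Real.log (2*ℓ) = Real.log 2 + Real.log ℓ := by
        rw [Real.log_mul (by norm_num) (ne_of_gt hℓpos)]
      have h8 : Real.log 2 ≤ 1 := by
        have := Real.log_le_sub_one_of_pos (show (0:ℝ) < 2 by norm_num); linarith
      have h9 : Real.log ℓ ≤ ℓ/2 := my_log_le_half ℓ hℓpos
      linarith
    have huL4 : ℓ/4 ≤ u := by linarith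
    -- |u - (ℓ - log ℓ)| ≤ M
    have hlogu_lb : Real.log ℓ - 2 ≤ Real.log u := by
      have h6 : Real.log (ℓ/4) ≤ Real.log u := by
        apply Real.log_le_log (by positivity) huL4
      have h7 : Real.log (ℓ/4) = Real.log ℓ - Real.log 4 := by
        rw [Real.log_div (ne_of_gt hℓpos) (by norm_num)]
      have h8 : Real.log 4 ≤ 2 := by
        have h9 : (4:ℝ) = 2^2 := by norm_num
        have h10 : Real.log 2 ≤ 1 := by
          have := Real.log_le_sub_one_of_pos (show (0:ℝ) < 2 by norm_num); linarith
        rw [h9, Real.log_pow]; push_cast; linarith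
      linarith
    have hlogu_ub2 : Real.log u ≤ Real.log ℓ + 1 := by
      have h6 : Real.log u ≤ Real.log (2*ℓ) := Real.log_le_log hupos hu2L
      have h7 : Real.log (2*ℓ) = Real.log 2 + Real.log ℓ := by
        rw [Real.log_mul (by norm_num) (ne_of_gt hℓpos)]
      have h8 : Real.log 2 ≤ 1 := by
        have := Real.log_le_sub_one_of_pos (show (0:ℝ) < 2 by norm_num); linarith
      linarith
    have hMb : |u - (ℓ - Real.log ℓ)| ≤ M := by
      rw [abs_le, hM]
      constructor <;> linarith
    exact ⟨habs, hTℓ, huL4, hu2L, hMb, ha⟩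
  refine ⟨s, ?_, ?_, ?_⟩
  · -- part 1
    filter_upwards [self_mem_nhdsWithin] with a ha
    have ha' : a < astar := ha
    obtain ⟨hp, heq⟩ := hs_spec a ha'
    have hε : 0 < (astar - a)/astar := div_pos (by linarith) hastar
    refine ⟨hp, ?_, ?_⟩
    · intro t ht
      have := hkey a ha' t
      have h2 : 0 ≤ (astar - a)/astar * (t - s a)^2 := by positivity
      simp only [Set.mem_setOf_eq]
      linarith
    · intro t ht hmin
      have h1 : (astar - a)/astar * t^2 + C * Real.exp (-(γ * t)) ≤
          (astar - a)/astar * (s a)^2 + C * Real.exp (-(γ * s a)) :=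
        hmin hp
      have h2 := hkey a ha' t
      have h3 : (astar - a)/astar * (t - s a)^2 ≤ 0 := by linarith
      have h4 : (t - s a)^2 ≤ 0 := by
        by_contra hcon
        push_neg at hcon
        nlinarith
      have h5 : t - s a = 0 := by nlinarith [sq_nonneg (t - s a)]
      linarith
  · -- part 2
    refine ⟨M, ?_⟩
    filter_upwards [hmain] with a ⟨habs, _, _, _, hMb, _⟩
    rw [habs]
    exact hMb
  · -- part 3
    have hLtop : Tendsto (fun a => -Real.log (astar - a)) (𝓝[<] astar) atTop := by
      have h1 : Tendsto (fun a => astar - a) (𝓝[<] astar) (𝓝[>] (0:ℝ)) := by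
        rw [tendsto_nhdsWithin_iff]
        constructor
        · have h0 : Tendsto (fun a : ℝ => astar - a) (𝓝 astar) (𝓝 0) :=
            Continuous.tendsto' (by fun_prop) astar 0 (by ring)
          exact h0.mono_left nhdsWithin_le_nhds
        · filter_upwards [self_mem_nhdsWithin] with a ha
          exact sub_pos.mpr (Set.mem_Iio.mp ha)
      have h2 : Tendsto Real.log (𝓝[>] (0:ℝ)) atBot :=
        Real.tendsto_log_nhdsGT_zero
      exact tendsto_neg_atBot_atTop.comp (h2.comp h1)
    have hlogdiv : Tendsto (fun x : ℝ => Real.log x / x) atTop (𝓝 0) :=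
      Real.isLittleO_log_id_atTop.tendsto_div_nhds_zero
    have hconstdiv : ∀ c : ℝ, Tendsto (fun x : ℝ => c / x) atTop (𝓝 0) := fun c =>
      tendsto_const_nhds.div_atTop tendsto_id
    have hbase : ∀ c : ℝ, Tendsto (fun x : ℝ => (x - Real.log x + c)/x) atTop (𝓝 1) := by
      intro c
      have h0 : Tendsto (fun x : ℝ => 1 - Real.log x/x + c/x) atTop (𝓝 1) := by
        have h1 := ((tendsto_const_nhds (x := (1:ℝ))).sub hlogdiv).add (hconstdiv c)
        simpa using h1
      refine h0.congr' ?_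
      filter_upwards [eventually_gt_atTop (0:ℝ)] with x hx
      field_simp
    have hg1 : Tendsto (fun x : ℝ => ((x - Real.log x - M)/x)^2) atTop (𝓝 1) := by
      have h := (hbase (-M)).pow 2
      rw [one_pow] at h
      exact h.congr (fun x => by ring_nf)
    have hg2 : Tendsto (fun x : ℝ => ((x - Real.log x + M)/x)^2 + 4/x) atTop (𝓝 1) := by
      have h := ((hbase M).pow 2).add (hconstdiv 4)
      rw [one_pow, add_zero] at h
      exact h
    apply tendsto_of_tendsto_of_tendsto_of_le_of_le' (hg1.comp hLtop) (hg2.comp hLtop)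
    · -- lower bound eventually
      filter_upwards [hmain] with a ⟨habs, hTℓ, huL4, hu2L, hMb, ha⟩
      obtain ⟨hp, heq⟩ := hs_spec a ha
      simp only [Function.comp_apply]
      set ℓ : ℝ := -Real.log (astar - a) with hℓdef
      set u : ℝ := γ * s a with hudef
      have hd0 : (0:ℝ) < astar - a := by linarith
      have hKn : (0:ℝ) ≤ |K| := abs_nonneg K
      have hℓpos : 0 < ℓ := by rw [hT] at hTℓ; linarith
      have hlogℓ : Real.log ℓ ≤ ℓ/2 := my_log_le_half ℓ hℓpos
      have hMℓ : M ≤ ℓ/4 - 2 := by rw [hM]; rw [hT] at hTℓ; linarith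
      have hCe : C * Real.exp (-(γ * s a)) = 2*((astar - a)/astar) * s a / γ := by
        rw [eq_div_iff (ne_of_gt hγ)]
        linear_combination -heq
      have hupos : 0 < u := mul_pos hγ hp
      have hratio : ((astar - a)/astar * (s a)^2 + C * Real.exp (-(γ * s a))) /
          ((astar - a) * |Real.log (astar - a)|^2/(astar * γ^2)) =
          (u^2 + 2*u)/ℓ^2 := by
        rw [hCe, habs, hudef]
        have hne1 : astar - a ≠ 0 := ne_of_gt hd0
        have hne2 : astar ≠ 0 := ne_of_gt hastar
        have hne3 : γ ≠ 0 := ne_of_gt hγ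
        have hne4 : ℓ ≠ 0 := ne_of_gt hℓpos
        field_simp
      rw [hratio]
      have hXu : ℓ - Real.log ℓ - M ≤ u := by
        have := (abs_le.mp hMb).1
        linarith
      have hX0 : 0 ≤ ℓ - Real.log ℓ - M := by linarith
      rw [div_pow, div_le_div_iff_of_pos_right (by positivity : (0:ℝ) < ℓ^2)]
      nlinarith
    · -- upper bound eventually
      filter_upwards [hmain] with a ⟨habs, hTℓ, huL4, hu2L, hMb, ha⟩
      obtain ⟨hp, heq⟩ := hs_spec a ha
      simp only [Function.comp_apply]
      set ℓ : ℝ := -Real.log (astar - a) with hℓdef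
      set u : ℝ := γ * s a with hudef
      have hd0 : (0:ℝ) < astar - a := by linarith
      have hKn : (0:ℝ) ≤ |K| := abs_nonneg K
      have hℓpos : 0 < ℓ := by rw [hT] at hTℓ; linarith
      have hlogℓ : Real.log ℓ ≤ ℓ/2 := my_log_le_half ℓ hℓpos
      have hCe : C * Real.exp (-(γ * s a)) = 2*((astar - a)/astar) * s a / γ := by
        rw [eq_div_iff (ne_of_gt hγ)]
        linear_combination -heq
      have hupos : 0 < u := mul_pos hγ hp
      have hratio : ((astar - a)/astar * (s a)^2 + C * Real.exp (-(γ * s a))) /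
          ((astar - a) * |Real.log (astar - a)|^2/(astar * γ^2)) =
          (u^2 + 2*u)/ℓ^2 := by
        rw [hCe, habs, hudef]
        have hne1 : astar - a ≠ 0 := ne_of_gt hd0
        have hne2 : astar ≠ 0 := ne_of_gt hastar
        have hne3 : γ ≠ 0 := ne_of_gt hγ
        have hne4 : ℓ ≠ 0 := ne_of_gt hℓpos
        field_simp
      rw [hratio]
      have hYu : u ≤ ℓ - Real.log ℓ + M := by
        have := (abs_le.mp hMb).2
        linarith
      have hY0 : 0 ≤ ℓ - Real.log ℓ + M := by
        rw [hM]; linarith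
      have h44 : (4*ℓ)/ℓ^2 = 4/ℓ := by
        field_simp
      calc (u^2 + 2*u)/ℓ^2 ≤ ((ℓ - Real.log ℓ + M)^2 + 4*ℓ)/ℓ^2 := by
            rw [div_le_div_iff_of_pos_right (by positivity : (0:ℝ) < ℓ^2)]
            nlinarith
        _ = ((ℓ - Real.log ℓ + M)/ℓ)^2 + 4/ℓ := by
            rw [add_div, div_pow, h44]
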